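/- Let G be a graph with an injective embedding ω: V_G → ℝ³ such that for every edge uv ∈ E_G, the vector ω(u) − ω(v) is parallel to one of the four vectors (1,0,0), (0,1,0), (0,0,1), (−1,−1,−1), and all four directions are present among the edges. Then there exist two NAC-colorings δ₁, δ₂ of G such that for any two edges e, f ∈ E_G, the vectors ω-images of e and f are parallel if and only if δ₁(e) = δ₁(f) and δ₂(e) = δ₂(f). -/

import Mathlib

open SimpleGraph Real

/-- The Euclidean plane. -/
abbrev Plane : Type := EuclideanSpace ℝ (Fin 2)

variable {V : Type*}

/-- A placement of a graph in the plane: endpoints of edges do not coincide. -/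
def IsPlacement (G : SimpleGraph V) (p : V → Plane) : Prop :=
  ∀ ⦃u v : V⦄, G.Adj u v → p u ≠ p v

/-- Two placements are equivalent as frameworks on `G` if corresponding
edge lengths agree. -/
def FrameworkEquiv (G : SimpleGraph V) (p q : V → Plane) : Prop :=
  ∀ ⦃u v : V⦄, G.Adj u v → dist (p u) (p v) = dist (q u) (q v)

/-- Two placements are congruent if all pairwise distances agree. -/
def PCongruent (p q : V → Plane) : Prop :=
  ∀ u v : V, dist (p u) (p v) = dist (q u) (q v)

/-- A flex of the framework `(G, p)`: a continuous path of placements on `[0,1]`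
starting at `p`, each equivalent to `(G, p)`. -/
def IsFlex (G : SimpleGraph V) (p : V → Plane) (f : ℝ → V → Plane) : Prop :=
  ContinuousOn f (Set.Icc 0 1) ∧ f 0 = p ∧
    ∀ t ∈ Set.Icc (0 : ℝ) 1, IsPlacement G (f t) ∧ FrameworkEquiv G p (f t)

/-- A flex is trivial if every placement along it is congruent to the initial one. -/
def IsTrivialFlex (p : V → Plane) (f : ℝ → V → Plane) : Prop :=
  ∀ t ∈ Set.Icc (0 : ℝ) 1, PCongruent (f t) p

/-- The placement `p` induces the labeling `lam`. -/
def Induces (G : SimpleGraph V) (p : V → Plane) (lam : Sym2 V → ℝ) : Prop :=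
  ∀ ⦃u v : V⦄, G.Adj u v → dist (p u) (p v) = lam s(u, v)

/-- A labeling (positive on the edges) is flexible if some framework inducing it
has a non-trivial flex. -/
def IsFlexibleLabeling (G : SimpleGraph V) (lam : Sym2 V → ℝ) : Prop :=
  (∀ e ∈ G.edgeSet, 0 < lam e) ∧
    ∃ p : V → Plane, Induces G p lam ∧ ∃ f, IsFlex G p f ∧ ¬ IsTrivialFlex p f

/-- A labeling is a proper flexible labeling if some framework inducing it has a
non-trivial flex in which all but finitely many placements are injective. -/
def IsProperFlexibleLabeling (G : SimpleGraph V) (lam : Sym2 V → ℝ) : Prop :=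
  (∀ e ∈ G.edgeSet, 0 < lam e) ∧
    ∃ p : V → Plane, Induces G p lam ∧ ∃ f, IsFlex G p f ∧ ¬ IsTrivialFlex p f ∧
      {t ∈ Set.Icc (0 : ℝ) 1 | ¬ Function.Injective (f t)}.Finite

/-- A graph is movable if it has a proper flexible labeling. -/
def Movable (G : SimpleGraph V) : Prop :=
  ∃ lam : Sym2 V → ℝ, IsProperFlexibleLabeling G lam

/-- A NAC-coloring: a surjective 2-coloring (`true` = red, `false` = blue) of the
edges such that every cycle is either monochromatic or contains at least two
edges of each color. -/
def IsNACColoring (G : SimpleGraph V) (δ : Sym2 V → Bool) : Prop :=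
  (∃ e ∈ G.edgeSet, δ e = true) ∧ (∃ e ∈ G.edgeSet, δ e = false) ∧
    ∀ ⦃v : V⦄ (c : G.Walk v v), c.IsCycle →
      (∀ e ∈ c.edges, δ e = true) ∨ (∀ e ∈ c.edges, δ e = false) ∨
        (2 ≤ (c.edges.filter (fun e => δ e)).length ∧
          2 ≤ (c.edges.filter (fun e => !(δ e))).length)

section NACaux

lemma NACaux_tele {G : SimpleGraph V} (h : V → ℝ) {u v : V} (w : G.Walk u v) :
    (w.darts.map (fun d => h d.toProd.1 - h d.toProd.2)).sum = h u - h v := by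
  induction w with
  | nil => simp
  | cons a w ih => rw [Walk.darts_cons, List.map_cons, List.sum_cons, ih]; ring

lemma NACaux_sum_filter (l : List ℝ) : (l.filter (fun x => !decide (x = 0))).sum = l.sum := by
  induction l with
  | nil => simp
  | cons a t ih => by_cases ha : a = 0 <;> simp [List.filter_cons, ha, ih]

lemma NACaux_countP_ne_one (l : List ℝ) (h : l.sum = 0) :
    l.countP (fun x => !decide (x = 0)) ≠ 1 := by
  intro hc
  rw [List.countP_eq_length_filter] at hc
  obtain ⟨x, hx⟩ := List.length_eq_one_iff.mp hc
  have hxm : x ∈ l.filter (fun x => !decide (x = 0)) := by rw [hx]; simp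
  have h2 := List.of_mem_filter hxm
  have hs := NACaux_sum_filter l
  rw [hx] at hs
  simp_all

lemma NACaux_count {G : SimpleGraph V} (δ : Sym2 V → Bool) (h : V → ℝ)
    (hiff : ∀ ⦃u v : V⦄, G.Adj u v → (δ s(u, v) = true ↔ h u - h v ≠ 0))
    {v : V} (c : G.Walk v v) (hex : ∃ e ∈ c.edges, δ e = true) :
    2 ≤ (c.edges.filter (fun e => δ e)).length := by
  set L := c.darts.map (fun d => h d.toProd.1 - h d.toProd.2) with hL
  have hsum : L.sum = 0 := by rw [hL, NACaux_tele h c, sub_self]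
  have h1 : (c.edges.filter (fun e => δ e)).length = L.countP (fun x => !decide (x = 0)) := by
    rw [← List.countP_eq_length_filter, hL, List.countP_map,
      show c.edges = c.darts.map Dart.edge from rfl, List.countP_map]
    apply List.countP_congr
    intro d _
    have hD := hiff d.adj
    simp only [Function.comp_apply]
    constructor
    · intro hδ
      simp only [Bool.not_eq_true', decide_eq_false_iff_not]
      exact hD.mp hδ
    · intro h3
      simp only [Bool.not_eq_true', decide_eq_false_iff_not] at h3
      exact hD.mpr h3
  have h2 : 1 ≤ (c.edges.filter (fun e => δ e)).length := by
    rw [← List.countP_eq_length_filter]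
    obtain ⟨e, he, hδe⟩ := hex
    exact List.countP_pos_iff.mpr ⟨e, he, by simpa using hδe⟩
  have h3 := NACaux_countP_ne_one L hsum
  omega

end NACaux

/-- The four admissible edge directions in `ℝ³`. -/
def spatialDirs : Set (Fin 3 → ℝ) :=
  {![1, 0, 0], ![0, 1, 0], ![0, 0, 1], ![-1, -1, -1]}

lemma NACaux_pattern {G : SimpleGraph V} {ω : V → Fin 3 → ℝ} (hinj : Function.Injective ω)
    {u v : V} (huv : G.Adj u v) (hd : ∃ d ∈ spatialDirs, ∃ c : ℝ, ω u - ω v = c • d) :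
    ∃ d ∈ spatialDirs, ∃ c : ℝ, c ≠ 0 ∧ (∀ i, ω u i - ω v i = c * d i) := by
  obtain ⟨d, hdm, c, hcd⟩ := hd
  refine ⟨d, hdm, c, ?_, fun i => by simpa using congrFun hcd i⟩
  rintro rfl
  exact huv.ne (hinj (sub_eq_zero.mp (by simpa using hcd)))

lemma NACaux_key {G : SimpleGraph V} {ω : V → Fin 3 → ℝ} (hinj : Function.Injective ω)
    {u v : V} (huv : G.Adj u v) (hd : ∃ d ∈ spatialDirs, ∃ c : ℝ, ω u - ω v = c • d) :
    ((ω u 0 - ω v 0) - (ω u 1 - ω v 1) = 0 ↔ ω u 2 - ω v 2 ≠ 0) ∧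
    ((ω u 0 - ω v 0) - (ω u 2 - ω v 2) = 0 ↔ ω u 1 - ω v 1 ≠ 0) := by
  obtain ⟨d, hdm, c, hc, hA⟩ := NACaux_pattern hinj huv hd
  simp only [spatialDirs, Set.mem_insert_iff, Set.mem_singleton_iff] at hdm
  rcases hdm with rfl | rfl | rfl | rfl <;>
    simp [hA 0, hA 1, hA 2, hc, sub_eq_zero]


/-- A graph with an injective spatial embedding whose edges are parallel to the four
directions, all occurring, has two NAC-colorings detecting parallelism of edges. -/
theorem NAC_pair_of_spatial_embedding [Fintype V] (G : SimpleGraph V)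
    (ω : V → Fin 3 → ℝ) (hinj : Function.Injective ω)
    (hpar : ∀ u v : V, G.Adj u v → ∃ d ∈ spatialDirs, ∃ c : ℝ, ω u - ω v = c • d)
    (hall : ∀ d ∈ spatialDirs, ∃ u v : V, G.Adj u v ∧ ∃ c : ℝ, ω u - ω v = c • d) :
    ∃ δ₁ δ₂ : Sym2 V → Bool, IsNACColoring G δ₁ ∧ IsNACColoring G δ₂ ∧
      ∀ u v x y : V, G.Adj u v → G.Adj x y →
        ((∃ c : ℝ, c ≠ 0 ∧ ω u - ω v = c • (ω x - ω y)) ↔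
          (δ₁ s(u, v) = δ₁ s(x, y) ∧ δ₂ s(u, v) = δ₂ s(x, y))) := by
  classical
  set δ₁ : Sym2 V → Bool := Sym2.lift ⟨fun u v =>
      !decide ((ω u 0 - ω v 0) - (ω u 1 - ω v 1) = 0), by
    intro u v
    have h : ((ω u 0 - ω v 0) - (ω u 1 - ω v 1) = 0) ↔
        ((ω v 0 - ω u 0) - (ω v 1 - ω u 1) = 0) := by constructor <;> intro h <;> linarith
    simp [h]⟩ with hδ₁def
  set δ₂ : Sym2 V → Bool := Sym2.lift ⟨fun u v =>
      !decide ((ω u 0 - ω v 0) - (ω u 2 - ω v 2) = 0), by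
    intro u v
    have h : ((ω u 0 - ω v 0) - (ω u 2 - ω v 2) = 0) ↔
        ((ω v 0 - ω u 0) - (ω v 2 - ω u 2) = 0) := by constructor <;> intro h <;> linarith
    simp [h]⟩ with hδ₂def
  have hδ₁ : ∀ u v : V, δ₁ s(u, v) = !decide ((ω u 0 - ω v 0) - (ω u 1 - ω v 1) = 0) :=
    fun u v => rfl
  have hδ₂ : ∀ u v : V, δ₂ s(u, v) = !decide ((ω u 0 - ω v 0) - (ω u 2 - ω v 2) = 0) :=
    fun u v => rfl
  have key : ∀ ⦃u v : V⦄, G.Adj u v →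
      (((ω u 0 - ω v 0) - (ω u 1 - ω v 1) = 0 ↔ ω u 2 - ω v 2 ≠ 0) ∧
       ((ω u 0 - ω v 0) - (ω u 2 - ω v 2) = 0 ↔ ω u 1 - ω v 1 ≠ 0)) :=
    fun u v huv => NACaux_key hinj huv (hpar u v huv)
  have getEdge : ∀ d ∈ spatialDirs,
      ∃ u v : V, G.Adj u v ∧ ∃ c : ℝ, c ≠ 0 ∧ ∀ i, ω u i - ω v i = c * d i := by
    intro d hd
    obtain ⟨u, v, huv, c, hcd⟩ := hall d hd
    refine ⟨u, v, huv, c, ?_, fun i => by simpa using congrFun hcd i⟩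
    rintro rfl
    exact huv.ne (hinj (sub_eq_zero.mp (by simpa using hcd)))
  obtain ⟨u1, v1, h1adj, c1, hc1, hA1⟩ := getEdge ![1, 0, 0] (by simp [spatialDirs])
  obtain ⟨u2, v2, h2adj, c2, hc2, hA2⟩ := getEdge ![0, 1, 0] (by simp [spatialDirs])
  obtain ⟨u3, v3, h3adj, c3, hc3, hA3⟩ := getEdge ![0, 0, 1] (by simp [spatialDirs])
  have nac : ∀ (δ : Sym2 V → Bool) (h g : V → ℝ),
      (∀ ⦃a b : V⦄, G.Adj a b → (δ s(a, b) = true ↔ h a - h b ≠ 0)) →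
      (∀ ⦃a b : V⦄, G.Adj a b → (δ s(a, b) = false ↔ g a - g b ≠ 0)) →
      (∃ e ∈ G.edgeSet, δ e = true) → (∃ e ∈ G.edgeSet, δ e = false) →
      IsNACColoring G δ := by
    intro δ h g hT hF heT heF
    refine ⟨heT, heF, ?_⟩
    intro v c hcyc
    by_cases hAllT : ∀ e ∈ c.edges, δ e = true
    · exact Or.inl hAllT
    by_cases hAllF : ∀ e ∈ c.edges, δ e = false
    · exact Or.inr (Or.inl hAllF)
    refine Or.inr (Or.inr ⟨?_, ?_⟩)
    · push_neg at hAllF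
      obtain ⟨e, he, hne⟩ := hAllF
      exact NACaux_count δ h hT c ⟨e, he, by simpa using hne⟩
    · push_neg at hAllT
      obtain ⟨e, he, hne⟩ := hAllT
      refine NACaux_count (fun e => !δ e) g ?_ c ⟨e, he, by simpa using hne⟩
      intro a b hab
      simpa using hF hab
  refine ⟨δ₁, δ₂, ?_, ?_, ?_⟩
  · refine nac δ₁ (fun w => ω w 0 - ω w 1) (fun w => ω w 2) ?_ ?_ ?_ ?_
    · intro a b hab
      simp only [hδ₁, Bool.not_eq_true', decide_eq_false_iff_not, not_not, ne_eq]
      constructor <;> intro hh hh' <;> apply hh <;> linarith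
    · intro a b hab
      simp only [hδ₁, Bool.not_eq_false', decide_eq_true_eq]
      exact (key hab).1
    · refine ⟨s(u1, v1), G.mem_edgeSet.mpr h1adj, ?_⟩
      rw [hδ₁, hA1 0, hA1 1]
      simp [hc1]
    · refine ⟨s(u3, v3), G.mem_edgeSet.mpr h3adj, ?_⟩
      rw [hδ₁, hA3 0, hA3 1]
      simp
  · refine nac δ₂ (fun w => ω w 0 - ω w 2) (fun w => ω w 1) ?_ ?_ ?_ ?_
    · intro a b hab
      simp only [hδ₂, Bool.not_eq_true', decide_eq_false_iff_not, not_not, ne_eq]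
      constructor <;> intro hh hh' <;> apply hh <;> linarith
    · intro a b hab
      simp only [hδ₂, Bool.not_eq_false', decide_eq_true_eq]
      exact (key hab).2
    · refine ⟨s(u1, v1), G.mem_edgeSet.mpr h1adj, ?_⟩
      rw [hδ₂, hA1 0, hA1 2]
      simp [hc1]
    · refine ⟨s(u2, v2), G.mem_edgeSet.mpr h2adj, ?_⟩
      rw [hδ₂, hA2 0, hA2 2]
      simp
  · intro u v x y huv hxy
    constructor
    · rintro ⟨c, hc, hEq⟩
      have hA : ∀ i, ω u i - ω v i = c * (ω x i - ω y i) := fun i => by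
        simpa using congrFun hEq i
      constructor
      · rw [hδ₁ u v, hδ₁ x y]
        have h : ((ω u 0 - ω v 0) - (ω u 1 - ω v 1) = 0) ↔
            ((ω x 0 - ω y 0) - (ω x 1 - ω y 1) = 0) := by
          rw [hA 0, hA 1, ← mul_sub, mul_eq_zero]
          simp [hc]
        simp [h]
      · rw [hδ₂ u v, hδ₂ x y]
        have h : ((ω u 0 - ω v 0) - (ω u 2 - ω v 2) = 0) ↔
            ((ω x 0 - ω y 0) - (ω x 2 - ω y 2) = 0) := by
          rw [hA 0, hA 2, ← mul_sub, mul_eq_zero]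
          simp [hc]
        simp [h]
    · rintro ⟨h1, h2⟩
      obtain ⟨d₁, hm₁, a₁, ha₁, hA⟩ := NACaux_pattern hinj huv (hpar u v huv)
      obtain ⟨d₂, hm₂, a₂, ha₂, hB⟩ := NACaux_pattern hinj hxy (hpar x y hxy)
      have hEq1 : ω u - ω v = a₁ • d₁ := funext fun i => by simpa using hA i
      have hEq2 : ω x - ω y = a₂ • d₂ := funext fun i => by simpa using hB i
      rw [hδ₁ u v, hδ₁ x y, hA 0, hA 1, hB 0, hB 1] at h1
      rw [hδ₂ u v, hδ₂ x y, hA 0, hA 2, hB 0, hB 2] at h2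
      simp only [spatialDirs, Set.mem_insert_iff, Set.mem_singleton_iff] at hm₁ hm₂
      rcases hm₁ with rfl | rfl | rfl | rfl <;> rcases hm₂ with rfl | rfl | rfl | rfl <;>
        first
          | (refine ⟨a₁ / a₂, div_ne_zero ha₁ ha₂, ?_⟩
             rw [hEq1, hEq2, smul_smul, div_mul_cancel₀ _ ha₂]
             done)
          | (exfalso; simp [ha₁, ha₂] at h1 h2)
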